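/- Let $x,x^\dagger\in\ell^2$ with $x\ne x^\dagger$ and $Ax\neq Ax^\dagger$, and suppose $d(R)=d^{A^*}_{x^\dagger}(R)$ is attained at $v_R$ with $\|v_R\|_Y\le R$ for each $R>0$. Setting $t=\|A(x-x^\dagger)\|_Y>0$ and choosing $R=\Phi^{-1}(t)$ where $\Phi(R)=d(R)^2/R$ (assumed to be a continuous strictly decreasing bijection of $(0,\infty)$ onto $(0,\infty)$), one obtains $-\langle x^\dagger,x-x^\dagger\rangle_{\ell^2}\le 2\,d(\Phi^{-1}(t))^2+\tfrac14\|x-x^\dagger\|_{\ell^2}^2$. -/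

import Mathlib

noncomputable section

/-- Let `x ≠ x†` with `Ax ≠ Ax†`, suppose the distance function
`d(R) = d^{A*}_{x†}(R)` is attained at `v_R` with `‖v_R‖ ≤ R` for each `R > 0`, and
let `Φ(R) = d(R)²/R` be a continuous strictly decreasing bijection of `(0,∞)` onto
itself with inverse `Ψ`. Then with `t = ‖A(x - x†)‖ > 0` and `R = Ψ(t)` one obtains
`-⟨x†, x - x†⟩ ≤ 2 d(Ψ(t))² + ¼‖x - x†‖²`. -/
theorem neg_inner_le_young_balance
    {Y : Type*} [NormedAddCommGroup Y] [InnerProductSpace ℝ Y] [CompleteSpace Y]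
    (A : lp (fun _ : ℕ => ℝ) 2 →L[ℝ] Y)
    (x xdag : lp (fun _ : ℕ => ℝ) 2) (hxne : x ≠ xdag) (hAxne : A x ≠ A xdag)
    (d : ℝ → ℝ)
    (hd : d = fun R =>
      sInf ((fun v : Y => ‖xdag - ContinuousLinearMap.adjoint A v‖) '' {v | ‖v‖ ≤ R}))
    (v : ℝ → Y)
    (hvnorm : ∀ R : ℝ, 0 < R → ‖v R‖ ≤ R)
    (hvatt : ∀ R : ℝ, 0 < R → ‖xdag - ContinuousLinearMap.adjoint A (v R)‖ = d R)
    (Φ : ℝ → ℝ) (hΦ : Φ = fun R => d R ^ 2 / R)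
    (hΦanti : StrictAntiOn Φ (Set.Ioi (0 : ℝ)))
    (Ψ : ℝ → ℝ)
    (hΨ : ∀ s : ℝ, 0 < s → 0 < Ψ s ∧ Φ (Ψ s) = s) :
    -(inner ℝ xdag (x - xdag) : ℝ) ≤
      2 * d (Ψ ‖A (x - xdag)‖) ^ 2 + (1 / 4) * ‖x - xdag‖ ^ 2 := by
  set t : ℝ := ‖A (x - xdag)‖ with ht
  have htpos : 0 < t := by
    rw [ht]
    have : A (x - xdag) ≠ 0 := by
      intro h
      rw [map_sub, sub_eq_zero] at h
      exact hAxne h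
    simpa [norm_pos_iff] using this
  obtain ⟨hRpos, hΦR⟩ := hΨ t htpos
  set R : ℝ := Ψ t with hR
  set e : lp (fun _ : ℕ => ℝ) 2 := x - xdag with he
  set u : lp (fun _ : ℕ => ℝ) 2 := xdag - ContinuousLinearMap.adjoint A (v R) with hu
  have hunorm : ‖u‖ = d R := hvatt R hRpos
  have hdR : d R ^ 2 = t * R := by
    have : d R ^ 2 / R = t := by rw [hΦ] at hΦR; exact hΦR
    field_simp at this
    linarith
  have hdnn : 0 ≤ d R := hunorm ▸ norm_nonneg u
  -- decompose
  have hdecomp : (inner ℝ xdag e : ℝ) =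
      inner ℝ (v R) (A e) + inner ℝ u e := by
    have : xdag = ContinuousLinearMap.adjoint A (v R) + u := by rw [hu]; abel
    rw [this, inner_add_left, ContinuousLinearMap.adjoint_inner_left]
  have h1 : -(inner ℝ (v R) (A e) : ℝ) ≤ R * t := by
    calc -(inner ℝ (v R) (A e) : ℝ) ≤ ‖(inner ℝ (v R) (A e) : ℝ)‖ := by
          rw [Real.norm_eq_abs]; exact neg_le_abs _
      _ ≤ ‖v R‖ * ‖A e‖ := norm_inner_le_norm _ _
      _ ≤ R * t := by
          apply mul_le_mul (hvnorm R hRpos) le_rfl (norm_nonneg _) (le_of_lt hRpos)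
  have h2 : -(inner ℝ u e : ℝ) ≤ d R * ‖e‖ := by
    calc -(inner ℝ u e : ℝ) ≤ ‖(inner ℝ u e : ℝ)‖ := by
          rw [Real.norm_eq_abs]; exact neg_le_abs _
      _ ≤ ‖u‖ * ‖e‖ := norm_inner_le_norm _ _
      _ = d R * ‖e‖ := by rw [hunorm]
  have hyoung : d R * ‖e‖ ≤ d R ^ 2 + (1 / 4) * ‖e‖ ^ 2 := by nlinarith [sq_nonneg (d R - ‖e‖ / 2)]
  have : -(inner ℝ xdag e : ℝ) ≤ R * t + d R * ‖e‖ := by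
    rw [hdecomp]; push_cast; linarith
  calc -(inner ℝ xdag e : ℝ) ≤ R * t + d R * ‖e‖ := this
    _ ≤ R * t + d R ^ 2 + (1 / 4) * ‖e‖ ^ 2 := by linarith
    _ = 2 * d R ^ 2 + (1 / 4) * ‖e‖ ^ 2 := by rw [hdR]; ring
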